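/- Let $t \ge 2$ and $t < k < n$. Define $\mathcal{F} = \{A \subseteq [n] : |A| \le k, [t] \subseteq A\} \cup \{A \subseteq [t] : |A| = t-1\}$. Then $|\mathcal{F}| = \sum_{j=0}^{k-t} \binom{n-t}{k-t-j} + t$, and every pair $A, B \in \mathcal{F}$ with $|A \cap B| \le t-1$ satisfies $|A \triangle B| \le k - t + 1$. -/

import Mathlib

theorem stmt_3 (n k t : ℕ) (ht : 2 ≤ t) (htk : t < k) (hkn : k < n)
    (F : Finset (Finset ℕ))
    (hF : F = (Finset.range n).powerset.filter
            (fun A => A.card ≤ k ∧ Finset.range t ⊆ A) ∪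
          (Finset.range t).powerset.filter (fun A => A.card = t - 1)) :
    F.card = (∑ j ∈ Finset.range (k - t + 1), (n - t).choose (k - t - j)) + t ∧
    ∀ A ∈ F, ∀ B ∈ F, (A ∩ B).card ≤ t - 1 →
      ((A \ B) ∪ (B \ A)).card ≤ k - t + 1 := by
  subst hF
  have htn : t ≤ n := le_of_lt (lt_trans htk hkn)
  have hrange : Finset.range t ⊆ Finset.range n := by
    simp [Finset.range_subset]; omega
  set F1 := (Finset.range n).powerset.filter
      (fun A => A.card ≤ k ∧ Finset.range t ⊆ A) with hF1
  set F2 := (Finset.range t).powerset.filter (fun A => A.card = t - 1) with hF2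
  constructor
  · have hdisj : Disjoint F1 F2 := by
      rw [Finset.disjoint_left]
      intro A hA hA'
      simp only [hF1, hF2, Finset.mem_filter, Finset.mem_powerset] at hA hA'
      have := Finset.card_le_card hA.2.2
      simp [Finset.card_range] at this
      omega
    rw [Finset.card_union_of_disjoint hdisj]
    have h2 : F2.card = t := by
      have : F2 = Finset.powersetCard (t - 1) (Finset.range t) := by
        rw [hF2, Finset.powersetCard_eq_filter]
      rw [this, Finset.card_powersetCard, Finset.card_range]
      have : t - 1 = t - 1 := rfl
      have h := Nat.choose_symm (show 1 ≤ t by omega) (n := t)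
      rw [h, Nat.choose_one_right]
    have h1 : F1.card = ∑ j ∈ Finset.range (k - t + 1), (n - t).choose (k - t - j) := by
      set s := Finset.range n \ Finset.range t with hs
      have hscard : s.card = n - t := by
        rw [hs, Finset.card_sdiff_of_subset hrange, Finset.card_range, Finset.card_range]
      set S := s.powerset.filter (fun B => B.card ≤ k - t) with hS
      have himg : F1 = S.image (fun B => B ∪ Finset.range t) := by
        ext A
        simp only [hF1, hS, Finset.mem_image, Finset.mem_filter, Finset.mem_powerset]
        constructor
        · rintro ⟨hAn, hAk, hAt⟩
          refine ⟨A \ Finset.range t, ⟨?_, ?_⟩, ?_⟩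
          · exact Finset.sdiff_subset_sdiff hAn (le_refl _)
          · rw [Finset.card_sdiff_of_subset hAt, Finset.card_range]
            omega
          · exact Finset.sdiff_union_of_subset hAt
        · rintro ⟨B, ⟨hBs, hBk⟩, rfl⟩
          refine ⟨?_, ?_, Finset.subset_union_right⟩
          · exact Finset.union_subset ((Finset.subset_sdiff.mp (hs ▸ hBs)).1) hrange
          · calc (B ∪ Finset.range t).card ≤ B.card + (Finset.range t).card :=
                Finset.card_union_le _ _
              _ ≤ (k - t) + t := by rw [Finset.card_range]; omega
              _ ≤ k := by omega
      have hinj : Set.InjOn (fun B => B ∪ Finset.range t) S := by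
        intro B1 h1 B2 h2 heq
        simp only [hS, Finset.mem_coe, Finset.mem_filter, Finset.mem_powerset] at h1 h2
        have d1 : Disjoint B1 (Finset.range t) :=
          (Finset.subset_sdiff.mp (hs ▸ h1.1)).2
        have d2 : Disjoint B2 (Finset.range t) :=
          (Finset.subset_sdiff.mp (hs ▸ h2.1)).2
        have := congrArg (fun X => X \ Finset.range t) heq
        simpa [Finset.union_sdiff_cancel_right d1, Finset.union_sdiff_cancel_right d2]
          using this
      rw [himg, Finset.card_image_of_injOn hinj]
      have hbi : S = (Finset.range (k - t + 1)).biUnion (fun i => Finset.powersetCard i s) := by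
        ext B
        simp only [hS, Finset.mem_filter, Finset.mem_powerset, Finset.mem_biUnion,
          Finset.mem_range, Finset.mem_powersetCard]
        constructor
        · rintro ⟨hBs, hBk⟩; exact ⟨B.card, by omega, hBs, rfl⟩
        · rintro ⟨i, hi, hBs, rfl⟩; exact ⟨hBs, by omega⟩
      rw [hbi, Finset.card_biUnion]
      · have : ∀ i ∈ Finset.range (k - t + 1),
            (Finset.powersetCard i s).card = (n - t).choose i := by
          intro i _
          rw [Finset.card_powersetCard, hscard]
        rw [Finset.sum_congr rfl this]
        have := Finset.sum_range_reflect (fun i => (n - t).choose i) (k - t + 1)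
        simp only [Nat.add_sub_cancel] at this
        exact this.symm
      · intro i hi j hj hij
        rw [Function.onFun, Finset.disjoint_left]
        intro B hB hB'
        rw [Finset.mem_powersetCard] at hB hB'
        exact hij (hB.2 ▸ hB'.2.symm ▸ rfl)
    rw [h1, h2]
  · intro A hA B hB hint
    have hmem : ∀ C, C ∈ F1 ∪ F2 →
        (C ⊆ Finset.range n ∧ C.card ≤ k ∧ Finset.range t ⊆ C) ∨
        (C ⊆ Finset.range t ∧ C.card = t - 1) := by
      intro C hC
      rcases Finset.mem_union.mp hC with h | h <;>
        simp only [hF1, hF2, Finset.mem_filter, Finset.mem_powerset] at h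
      · exact Or.inl ⟨h.1, h.2⟩
      · exact Or.inr h
    rcases hmem A hA with ⟨hAn, hAk, hAt⟩ | ⟨hAt, hAc⟩ <;>
      rcases hmem B hB with ⟨hBn, hBk, hBt⟩ | ⟨hBt, hBc⟩
    · exfalso
      have : Finset.range t ⊆ A ∩ B := Finset.subset_inter hAt hBt
      have := Finset.card_le_card this
      rw [Finset.card_range] at this
      omega
    · have hBA : B ⊆ A := hBt.trans hAt
      have : B \ A = ∅ := Finset.sdiff_eq_empty_iff_subset.mpr hBA
      rw [this, Finset.union_empty, Finset.card_sdiff_of_subset hBA, hBc]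
      omega
    · have hAB : A ⊆ B := hAt.trans hBt
      have : A \ B = ∅ := Finset.sdiff_eq_empty_iff_subset.mpr hAB
      rw [this, Finset.empty_union, Finset.card_sdiff_of_subset hAB, hAc]
      omega
    · have hU : (A ∪ B).card ≤ t := by
        have := Finset.card_le_card (Finset.union_subset hAt hBt)
        rwa [Finset.card_range] at this
      have hI : (A ∪ B).card + (A ∩ B).card = A.card + B.card :=
        Finset.card_union_add_card_inter A B
      have e1 : (A \ B).card + (A ∩ B).card = A.card :=
        Finset.card_sdiff_add_card_inter A B
      have e2 : (B \ A).card + (B ∩ A).card = B.card :=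
        Finset.card_sdiff_add_card_inter B A
      rw [Finset.inter_comm] at e2
      have hle := Finset.card_union_le (A \ B) (B \ A)
      omega
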